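/- Let A_0, …, A_n be real numbers and M_0, …, M_n strictly positive real numbers with ∑_i A_i = 0 and ∑_i A_i M_i² = 0. Then the function q ↦ ∑_i A_i / (‖q‖² + M_i²) is Lebesgue integrable on ℝ⁴ and ∫_{ℝ⁴} ∑_i A_i / (‖q‖² + M_i²) dq = π² ∑_i A_i M_i² log(M_i²). -/

import Mathlib

open MeasureTheory Real Set Filter Metric

private lemma pv_ball_vol :
    (volume (Metric.ball (0 : EuclideanSpace ℝ (Fin 4)) 1)).toReal = π ^ 2 / 2 := by
  rw [EuclideanSpace.volume_ball]
  have h3 : Real.Gamma ((Fintype.card (Fin 4) : ℝ) / 2 + 1) = 2 := by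
    rw [show ((Fintype.card (Fin 4) : ℝ) / 2 + 1) = (2 : ℕ) + 1 by simp; norm_num,
      Real.Gamma_nat_eq_factorial]
    norm_num
  rw [h3]
  have hs : Real.sqrt π ^ Fintype.card (Fin 4) = π ^ 2 := by
    simp only [Fintype.card_fin]
    rw [show (4 : ℕ) = 2 * 2 from rfl, pow_mul, Real.sq_sqrt pi_pos.le]
  rw [hs]
  simp [ENNReal.toReal_ofReal (by positivity : (0:ℝ) ≤ π ^ 2 / 2)]

private lemma pv_oneD (a : ℝ) (ha : 0 < a) :
    ∫ y in Ioi (0 : ℝ), y ^ 3 * ((a - 1) ^ 2 / ((y ^ 2 + 1) ^ 2 * (y ^ 2 + a))) =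
      (a * Real.log a - a + 1) / 2 := by
  set G : ℝ → ℝ := fun r =>
    (a * Real.log (r ^ 2 + 1) - (1 - a) * (r ^ 2 + 1)⁻¹ - a * Real.log (r ^ 2 + a)) / 2 with hG
  have hderiv : ∀ r ∈ Ici (0 : ℝ),
      HasDerivAt G (r ^ 3 * ((a - 1) ^ 2 / ((r ^ 2 + 1) ^ 2 * (r ^ 2 + a)))) r := by
    intro r _
    have h1 : (0:ℝ) < r ^ 2 + 1 := by positivity
    have h2 : (0:ℝ) < r ^ 2 + a := by positivity
    have d0 : HasDerivAt (fun r : ℝ => r ^ 2 + 1) (2 * r) r := by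
      simpa using (hasDerivAt_pow 2 r).add_const 1
    have d0' : HasDerivAt (fun r : ℝ => r ^ 2 + a) (2 * r) r := by
      simpa using (hasDerivAt_pow 2 r).add_const a
    have dlog1 : HasDerivAt (fun r : ℝ => Real.log (r ^ 2 + 1)) ((r ^ 2 + 1)⁻¹ * (2 * r)) r :=
      by have := (Real.hasDerivAt_log h1.ne').comp r d0; exact this
    have dlog2 : HasDerivAt (fun r : ℝ => Real.log (r ^ 2 + a)) ((r ^ 2 + a)⁻¹ * (2 * r)) r :=
      by have := (Real.hasDerivAt_log h2.ne').comp r d0'; exact this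
    have dinv : HasDerivAt (fun r : ℝ => (r ^ 2 + 1)⁻¹) (-(2 * r) / (r ^ 2 + 1) ^ 2) r :=
      d0.inv h1.ne'
    have d : HasDerivAt G
        ((a * ((r ^ 2 + 1)⁻¹ * (2 * r)) - (1 - a) * (-(2 * r) / (r ^ 2 + 1) ^ 2)
          - a * ((r ^ 2 + a)⁻¹ * (2 * r))) / 2) r :=
      (((dlog1.const_mul a).sub (dinv.const_mul (1 - a))).sub (dlog2.const_mul a)).div_const 2
    convert d using 1
    field_simp
    ring
  have hpos : ∀ r ∈ Ioi (0 : ℝ),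
      0 ≤ r ^ 3 * ((a - 1) ^ 2 / ((r ^ 2 + 1) ^ 2 * (r ^ 2 + a))) := by
    intro r hr
    have hr' : (0:ℝ) < r := hr
    positivity
  have hsq : Tendsto (fun r : ℝ => r ^ 2) atTop atTop := tendsto_pow_atTop two_ne_zero
  have h1b : Tendsto (fun r : ℝ => (1 - a) * (r ^ 2 + 1)⁻¹) atTop (nhds 0) := by
    simpa using ((tendsto_atTop_add_const_right _ 1 hsq).inv_tendsto_atTop).const_mul (1 - a)
  have h1a : Tendsto (fun r : ℝ => (1 - a) * (r ^ 2 + a)⁻¹) atTop (nhds 0) := by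
    simpa using ((tendsto_atTop_add_const_right _ a hsq).inv_tendsto_atTop).const_mul (1 - a)
  have hratio : Tendsto (fun r : ℝ => (r ^ 2 + 1) / (r ^ 2 + a)) atTop (nhds 1) := by
    have heq : ∀ r : ℝ, (r ^ 2 + 1) / (r ^ 2 + a) = 1 + (1 - a) * (r ^ 2 + a)⁻¹ := by
      intro r
      have h2 : (0:ℝ) < r ^ 2 + a := by positivity
      field_simp
      ring
    rw [funext heq]
    simpa using tendsto_const_nhds.add h1a
  have hlog : Tendsto (fun r : ℝ => Real.log (r ^ 2 + 1) - Real.log (r ^ 2 + a)) atTop (nhds 0) := by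
    have := (Real.continuousAt_log one_ne_zero).tendsto.comp hratio
    rw [Real.log_one] at this
    refine this.congr fun r => ?_
    have h1 : (0:ℝ) < r ^ 2 + 1 := by positivity
    have h2 : (0:ℝ) < r ^ 2 + a := by positivity
    exact Real.log_div h1.ne' h2.ne'
  have htend : Tendsto G atTop (nhds 0) := by
    have : Tendsto (fun r : ℝ =>
        (a * (Real.log (r ^ 2 + 1) - Real.log (r ^ 2 + a)) - (1 - a) * (r ^ 2 + 1)⁻¹) / 2)
        atTop (nhds ((a * 0 - 0) / 2)) := ((hlog.const_mul a).sub h1b).div_const 2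
    simp only [mul_zero, sub_zero, zero_div] at this
    exact this.congr fun r => by simp only [hG]; ring
  have hval := integral_Ioi_of_hasDerivAt_of_nonneg' hderiv hpos htend
  rw [hval]
  simp only [hG]
  norm_num
  ring

private lemma pv_fourD (a : ℝ) (ha : 0 < a) :
    Integrable (fun q : EuclideanSpace ℝ (Fin 4) =>
      (a - 1) ^ 2 / ((‖q‖ ^ 2 + 1) ^ 2 * (‖q‖ ^ 2 + a))) ∧
    ∫ q : EuclideanSpace ℝ (Fin 4), (a - 1) ^ 2 / ((‖q‖ ^ 2 + 1) ^ 2 * (‖q‖ ^ 2 + a)) =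
      π ^ 2 * (a * Real.log a - a + 1) := by
  constructor
  · have hcont : Continuous fun q : EuclideanSpace ℝ (Fin 4) =>
        (a - 1) ^ 2 / ((‖q‖ ^ 2 + 1) ^ 2 * (‖q‖ ^ 2 + a)) := by
      apply Continuous.div continuous_const (by continuity)
      intro q
      have : (0:ℝ) < ‖q‖ ^ 2 + a := by positivity
      positivity
    have hint : Integrable (fun q : EuclideanSpace ℝ (Fin 4) => ((1:ℝ) + ‖q‖) ^ (-(5:ℝ))) := by
      apply integrable_one_add_norm
      rw [finrank_euclideanSpace_fin]
      norm_num
    have hmin : (0:ℝ) < min a 1 := lt_min ha one_pos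
    refine (hint.const_mul (8 * (a - 1) ^ 2 / min a 1)).mono' hcont.aestronglyMeasurable ?_
    filter_upwards with q
    set r := ‖q‖ with hrdef
    have hr : (0:ℝ) ≤ r := norm_nonneg q
    have h2 : (0:ℝ) < r ^ 2 + a := by positivity
    have h5 : ((1:ℝ) + r) ^ (-(5:ℝ)) = ((1 + r) ^ (5:ℕ))⁻¹ := by
      rw [← Real.rpow_natCast (1 + r) 5, ← Real.rpow_neg (by positivity)]
      norm_num
    rw [Real.norm_eq_abs, abs_of_nonneg (by positivity), h5]
    have hA2 : ((1:ℝ) + r) ^ 2 ≤ 2 * (1 + r ^ 2) := by nlinarith [sq_nonneg (1 - r)]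
    have hB : ((1:ℝ) + r) ^ 6 ≤ 8 * (1 + r ^ 2) ^ 3 := by
      have := pow_le_pow_left₀ (by positivity : (0:ℝ) ≤ (1 + r) ^ 2) hA2 3
      calc ((1:ℝ) + r) ^ 6 = (((1:ℝ) + r) ^ 2) ^ 3 := by ring
        _ ≤ (2 * (1 + r ^ 2)) ^ 3 := this
        _ = 8 * (1 + r ^ 2) ^ 3 := by ring
    have h56 : ((1:ℝ) + r) ^ 5 ≤ (1 + r) ^ 6 :=
      pow_le_pow_right₀ (by linarith) (by norm_num)
    have hC : min a 1 * (1 + r ^ 2) ≤ r ^ 2 + a := by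
      have h1 : min a 1 ≤ a := min_le_left _ _
      have h2' : min a 1 ≤ 1 := min_le_right _ _
      nlinarith [sq_nonneg r]
    have key : min a 1 * (1 + r) ^ 5 ≤ 8 * ((r ^ 2 + 1) ^ 2 * (r ^ 2 + a)) :=
      calc min a 1 * (1 + r) ^ 5 ≤ min a 1 * (1 + r) ^ 6 :=
            mul_le_mul_of_nonneg_left h56 hmin.le
        _ ≤ min a 1 * (8 * (1 + r ^ 2) ^ 3) := mul_le_mul_of_nonneg_left hB hmin.le
        _ = 8 * (1 + r ^ 2) ^ 2 * (min a 1 * (1 + r ^ 2)) := by ring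
        _ ≤ 8 * (1 + r ^ 2) ^ 2 * (r ^ 2 + a) :=
            mul_le_mul_of_nonneg_left hC (by positivity)
        _ = 8 * ((r ^ 2 + 1) ^ 2 * (r ^ 2 + a)) := by ring
    have hrw : 8 * (a - 1) ^ 2 / min a 1 * ((1 + r) ^ (5:ℕ))⁻¹ =
        (8 * (a - 1) ^ 2) / (min a 1 * (1 + r) ^ (5:ℕ)) := by
      rw [div_mul_eq_mul_div, ← div_eq_mul_inv, div_div]; ring
    rw [hrw, div_le_div_iff₀ (by positivity) (by positivity)]
    nlinarith [mul_le_mul_of_nonneg_left key (sq_nonneg (a - 1))]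
  · have hrad := integral_fun_norm_addHaar (volume : Measure (EuclideanSpace ℝ (Fin 4)))
      (fun y : ℝ => (a - 1) ^ 2 / ((y ^ 2 + 1) ^ 2 * (y ^ 2 + a)))
    simp only [finrank_euclideanSpace_fin, smul_eq_mul, nsmul_eq_mul] at hrad
    norm_num at hrad
    rw [hrad, measureReal_def, pv_ball_vol, pv_oneD a ha]
    ring

/-- Identity (int-q1): `∫_{ℝ⁴} ∑ᵢ Aᵢ/(‖q‖² + Mᵢ²) dq = π² ∑ᵢ Aᵢ Mᵢ² log Mᵢ²`. -/
theorem integral_pauliVillars_one_propagator (n : ℕ) (A M : Fin (n + 1) → ℝ)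
    (hM : ∀ i, 0 < M i) (hA : ∑ i, A i = 0) (hAM : ∑ i, A i * M i ^ 2 = 0) :
    Integrable (fun q : EuclideanSpace ℝ (Fin 4) => ∑ i, A i / (‖q‖ ^ 2 + M i ^ 2)) ∧
    ∫ q : EuclideanSpace ℝ (Fin 4), ∑ i, A i / (‖q‖ ^ 2 + M i ^ 2) =
      π ^ 2 * ∑ i, A i * M i ^ 2 * Real.log (M i ^ 2) := by
  have key : ∀ q : EuclideanSpace ℝ (Fin 4), ∑ i, A i / (‖q‖ ^ 2 + M i ^ 2) =
      ∑ i, A i * ((M i ^ 2 - 1) ^ 2 / ((‖q‖ ^ 2 + 1) ^ 2 * (‖q‖ ^ 2 + M i ^ 2))) := by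
    intro q
    have h1 : (0:ℝ) < ‖q‖ ^ 2 + 1 := by positivity
    have step : ∀ i, A i / (‖q‖ ^ 2 + M i ^ 2) =
        (A i / (‖q‖ ^ 2 + 1) - (A i * M i ^ 2 - A i) / (‖q‖ ^ 2 + 1) ^ 2)
          + A i * ((M i ^ 2 - 1) ^ 2 / ((‖q‖ ^ 2 + 1) ^ 2 * (‖q‖ ^ 2 + M i ^ 2))) := by
      intro i
      have h2 : (0:ℝ) < ‖q‖ ^ 2 + M i ^ 2 :=
        add_pos_of_nonneg_of_pos (by positivity) (pow_pos (hM i) 2)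
      field_simp
      ring
    rw [Finset.sum_congr rfl fun i _ => step i, Finset.sum_add_distrib, Finset.sum_sub_distrib,
      ← Finset.sum_div, ← Finset.sum_div, Finset.sum_sub_distrib, hA, hAM]
    norm_num
  have hfun : (fun q : EuclideanSpace ℝ (Fin 4) => ∑ i, A i / (‖q‖ ^ 2 + M i ^ 2)) =
      fun q => ∑ i, A i * ((M i ^ 2 - 1) ^ 2 / ((‖q‖ ^ 2 + 1) ^ 2 * (‖q‖ ^ 2 + M i ^ 2))) :=
    funext key
  have hint : ∀ i, Integrable (fun q : EuclideanSpace ℝ (Fin 4) =>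
      (M i ^ 2 - 1) ^ 2 / ((‖q‖ ^ 2 + 1) ^ 2 * (‖q‖ ^ 2 + M i ^ 2))) :=
    fun i => (pv_fourD _ (pow_pos (hM i) 2)).1
  constructor
  · rw [hfun]
    exact integrable_finset_sum _ fun i _ => (hint i).const_mul (A i)
  · rw [hfun, integral_finset_sum _ fun i _ => (hint i).const_mul (A i)]
    have hterm : ∀ i, ∫ q : EuclideanSpace ℝ (Fin 4),
        A i * ((M i ^ 2 - 1) ^ 2 / ((‖q‖ ^ 2 + 1) ^ 2 * (‖q‖ ^ 2 + M i ^ 2))) =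
        A i * (π ^ 2 * (M i ^ 2 * Real.log (M i ^ 2) - M i ^ 2 + 1)) := by
      intro i
      rw [integral_const_mul, (pv_fourD _ (pow_pos (hM i) 2)).2]
    rw [Finset.sum_congr rfl fun i _ => hterm i]
    have expand : ∑ i, A i * (π ^ 2 * (M i ^ 2 * Real.log (M i ^ 2) - M i ^ 2 + 1)) =
        π ^ 2 * (∑ i, A i * M i ^ 2 * Real.log (M i ^ 2)) - π ^ 2 * (∑ i, A i * M i ^ 2)
          + π ^ 2 * (∑ i, A i) := by
      rw [Finset.mul_sum, Finset.mul_sum, Finset.mul_sum, ← Finset.sum_sub_distrib,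
        ← Finset.sum_add_distrib]
      exact Finset.sum_congr rfl fun i _ => by ring
    rw [expand, hA, hAM]
    ring
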